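/- For distinct reals t_1 < t_2 < ... < t_n with n ≥ 4, the vector configuration w_i = (-1)^i (1, t_i, t_i^2) in R^3 is coneighborly: every open linear halfspace {x : ⟨u, x⟩ > 0}, u ≠ 0, contains at least floor((n-2)/2) of the vectors w_i. -/

import Mathlib

lemma quad_core (u0 u1 u2 a b c d : ℝ) (hab : a < b) (hbc : b < c) (hcd : c < d)
    (hu : ¬(u0 = 0 ∧ u1 = 0 ∧ u2 = 0))
    (h1 : u0 + u1*a + u2*a^2 ≤ 0) (h2 : 0 ≤ u0 + u1*b + u2*b^2)
    (h3 : u0 + u1*c + u2*c^2 ≤ 0) (h4 : 0 ≤ u0 + u1*d + u2*d^2) : False := by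
  rcases lt_trichotomy u2 0 with h|h|h
  · nlinarith [mul_pos (sub_pos.2 hbc) (sub_pos.2 hcd), mul_pos (mul_pos (sub_pos.2 hbc) (sub_pos.2 hcd)) (sub_pos.2 (hbc.trans hcd)), mul_nonneg (le_of_lt (sub_pos.2 hcd)) h2, mul_nonneg (le_of_lt (sub_pos.2 hbc)) h4]
  · subst h
    rcases lt_trichotomy u1 0 with h'|h'|h'
    · nlinarith [mul_pos (neg_pos.2 h') (sub_pos.2 hab)]
    · subst h'
      exact hu ⟨le_antisymm (by linarith) (by linarith), rfl, rfl⟩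
    · nlinarith [mul_pos h' (sub_pos.2 hbc)]
  · nlinarith [mul_pos (sub_pos.2 hab) (sub_pos.2 hbc), mul_pos (mul_pos (sub_pos.2 hab) (sub_pos.2 hbc)) (sub_pos.2 (hab.trans hbc)), mul_nonpos_of_nonneg_of_nonpos (le_of_lt (sub_pos.2 hbc)) h1, mul_nonpos_of_nonneg_of_nonpos (le_of_lt (sub_pos.2 hab)) h3]

theorem stmt_16 (n : ℕ) (hn : 4 ≤ n) (t : Fin n → ℝ) (ht : StrictMono t)
    (u : Fin 3 → ℝ) (hu : u ≠ 0) :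
    (n - 2)/2 ≤ (Finset.univ.filter (fun i : Fin n =>
      0 < ((-1 : ℝ)^(i : ℕ)) * (u 0 + u 1 * t i + u 2 * (t i)^2))).card := by
  classical
  have hn0 : 0 < n := by omega
  set T := Finset.univ.filter (fun i : Fin n =>
      0 < ((-1 : ℝ)^(i : ℕ)) * (u 0 + u 1 * t i + u 2 * (t i)^2)) with hT
  set e : ℕ → Fin n := fun j => ⟨j % n, Nat.mod_lt _ hn0⟩ with he
  have hev : ∀ j, j < n → ((e j : ℕ)) = j := fun j hj => Nat.mod_eq_of_lt hj
  set m := n / 2 with hm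
  have hlt : ∀ k, k < m → 2*k+1 < n := by intro k hk; omega
  have horder : ∀ j j' : ℕ, j < j' → j' < n → e j < e j' := by
    intro j j' hjj hj'
    simp only [he, Fin.mk_lt_mk]
    rw [Nat.mod_eq_of_lt (lt_trans hjj hj'), Nat.mod_eq_of_lt hj']
    exact hjj
  have hu' : ¬(u 0 = 0 ∧ u 1 = 0 ∧ u 2 = 0) := by
    rintro ⟨h0, h1, h2⟩
    apply hu
    funext i
    fin_cases i <;> assumption
  have hmemA : ∀ k, k < m → ((e (2*k) ∈ T) ↔ 0 < u 0 + u 1 * t (e (2*k)) + u 2 * (t (e (2*k)))^2) := by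
    intro k hk
    have h2k : ((e (2*k) : ℕ)) = 2*k := hev _ (by omega)
    have : ((-1 : ℝ))^((e (2*k) : ℕ)) = 1 := by
      rw [h2k]; exact Even.neg_one_pow ⟨k, by ring⟩
    simp [hT, Finset.mem_filter, this]
  have hmemB : ∀ k, k < m → ((e (2*k+1) ∈ T) ↔ u 0 + u 1 * t (e (2*k+1)) + u 2 * (t (e (2*k+1)))^2 < 0) := by
    intro k hk
    have h2k : ((e (2*k+1) : ℕ)) = 2*k+1 := hev _ (hlt k hk)
    have : ((-1 : ℝ))^((e (2*k+1) : ℕ)) = -1 := by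
      rw [h2k]; exact Odd.neg_one_pow ⟨k, by ring⟩
    simp only [hT, Finset.mem_filter, Finset.mem_univ, true_and, this]
    constructor
    · intro h; nlinarith
    · intro h; nlinarith
  -- the "bad" pairs
  set B := (Finset.range m).filter (fun k => ¬(e (2*k) ∈ T ∨ e (2*k+1) ∈ T)) with hB
  have hBcard : B.card ≤ 1 := by
    rw [Finset.card_le_one]
    intro k hk k' hk'
    simp only [hB, Finset.mem_filter, Finset.mem_range, not_or] at hk hk'
    by_contra hne
    -- wlog k < k'
    rcases lt_trichotomy k k' with hlt'|heq|hlt'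
    all_goals first
    | exact hne heq
    | skip
    · refine quad_core (u 0) (u 1) (u 2) (t (e (2*k))) (t (e (2*k+1))) (t (e (2*k'))) (t (e (2*k'+1))) ?_ ?_ ?_ hu' ?_ ?_ ?_ ?_
      · exact ht (horder _ _ (by omega) (by omega))
      · exact ht (horder _ _ (by omega) (by omega))
      · exact ht (horder _ _ (by omega) (by omega))
      · have := (hmemA k hk.1).not.1 hk.2.1; linarith [not_lt.1 this]
      · have := (hmemB k hk.1).not.1 hk.2.2; linarith [not_lt.1 this]
      · have := (hmemA k' hk'.1).not.1 hk'.2.1; linarith [not_lt.1 this]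
      · have := (hmemB k' hk'.1).not.1 hk'.2.2; linarith [not_lt.1 this]
    · refine quad_core (u 0) (u 1) (u 2) (t (e (2*k'))) (t (e (2*k'+1))) (t (e (2*k))) (t (e (2*k+1))) ?_ ?_ ?_ hu' ?_ ?_ ?_ ?_
      · exact ht (horder _ _ (by omega) (by omega))
      · exact ht (horder _ _ (by omega) (by omega))
      · exact ht (horder _ _ (by omega) (by omega))
      · have := (hmemA k' hk'.1).not.1 hk'.2.1; linarith [not_lt.1 this]
      · have := (hmemB k' hk'.1).not.1 hk'.2.2; linarith [not_lt.1 this]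
      · have := (hmemA k hk.1).not.1 hk.2.1; linarith [not_lt.1 this]
      · have := (hmemB k hk.1).not.1 hk.2.2; linarith [not_lt.1 this]
  set G := (Finset.range m).filter (fun k => e (2*k) ∈ T ∨ e (2*k+1) ∈ T) with hG
  have hGB : G.card + B.card = m := by
    rw [hG, hB]
    simpa using Finset.card_filter_add_card_filter_not
      (s := Finset.range m) (p := fun k => e (2*k) ∈ T ∨ e (2*k+1) ∈ T)
  have hGcard : m - 1 ≤ G.card := by omega
  have hinj : G.card ≤ T.card := by
    apply Finset.card_le_card_of_injOn (fun k => if e (2*k) ∈ T then e (2*k) else e (2*k+1))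
    · intro k hk
      simp only [hG, Finset.mem_coe, Finset.mem_filter, Finset.mem_range] at hk
      simp only [Finset.mem_coe]
      split_ifs with h
      · exact h
      · exact hk.2.resolve_left h
    · intro k hk k' hk' heq
      simp only [Finset.coe_filter, Set.mem_setOf_eq, Finset.mem_range, hG] at hk hk'
      have key : ∀ j, j < m → (((if e (2*j) ∈ T then e (2*j) else e (2*j+1)) : Fin n) : ℕ) / 2 = j := by
        intro j hj
        split_ifs
        · rw [hev (2*j) (by omega)]; omega
        · rw [hev (2*j+1) (hlt j hj)]; omega
      exact (key k hk.1).symm.trans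
        ((congrArg (fun x : Fin n => (x : ℕ)/2) heq).trans (key k' hk'.1))
  omega
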